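/- For every binary (n,M) code C, the average Hamming distance satisfies d̄(C) ≥ 3/2 − 2/M. -/

import Mathlib

open Finset

noncomputable def avgDist (n : ℕ) (C : Finset (Fin n → Bool)) : ℝ :=
  (1 / (C.card : ℝ) ^ 2) * ∑ c ∈ C, ∑ c' ∈ C, (hammingDist c c' : ℝ)

noncomputable def beta (n M : ℕ) : ℝ :=
  sInf {x : ℝ | ∃ C : Finset (Fin n → Bool), C.card = M ∧ avgDist n C = x}

def wpar {n : ℕ} (c : Fin n → Bool) : ZMod 2 := ∑ i, (if c i then 1 else 0)

lemma parity_lemma {n : ℕ} (c c' : Fin n → Bool) :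
    (hammingDist c c' : ZMod 2) = wpar c + wpar c' := by
  unfold wpar
  rw [hammingDist, Finset.card_filter]
  push_cast
  rw [← Finset.sum_add_distrib]
  refine Finset.sum_congr rfl fun i _ => ?_
  cases hc : c i <;> cases hc' : c' i <;> simp [hc, hc'] <;> decide

lemma two_le_of_eqpar {n : ℕ} {c c' : Fin n → Bool} (hne : c ≠ c')
    (hw : wpar c = wpar c') : 2 ≤ hammingDist c c' := by
  have h1 : 0 < hammingDist c c' := hammingDist_pos.mpr hne
  have h2 : (hammingDist c c' : ZMod 2) = 0 := by
    rw [parity_lemma, hw]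
    exact (by decide : ∀ x : ZMod 2, x + x = 0) _
  have := (ZMod.natCast_eq_zero_iff (hammingDist c c') 2).mp h2
  omega

lemma pointwise {n : ℕ} (c c' : Fin n → Bool) :
    (1 : ℝ) + (if wpar c = wpar c' then 1 else 0) - (if c = c' then 2 else 0)
      ≤ (hammingDist c c' : ℝ) := by
  by_cases h : c = c'
  · subst h; simp; norm_num
  · by_cases hw : wpar c = wpar c'
    · have := two_le_of_eqpar h hw
      simp only [hw, h, if_true, if_false]
      push_cast; norm_num
      exact_mod_cast this
    · have : 0 < hammingDist c c' := hammingDist_pos.mpr h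
      simp only [hw, h, if_false]
      push_cast; norm_num
      exact_mod_cast this

theorem stmt_3 (n : ℕ) (C : Finset (Fin n → Bool)) (hC : C.Nonempty) :
    avgDist n C ≥ 3 / 2 - 2 / (C.card : ℝ) := by
  set M : ℝ := (C.card : ℝ) with hMdef
  have hM : (0 : ℝ) < M := by
    rw [hMdef]; exact_mod_cast Finset.card_pos.mpr hC
  set A := C.filter (fun c => wpar c = 0) with hA
  set B := C.filter (fun c => ¬ wpar c = 0) with hB
  have hab : (A.card : ℝ) + B.card = M := by
    rw [hMdef]
    exact_mod_cast congrArg (Nat.cast (R := ℝ))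
      (Finset.card_filter_add_card_filter_not (s := C) (p := fun c => wpar c = 0))
  -- S2 computation
  have hS2 : ∑ c ∈ C, ∑ c' ∈ C, (if wpar c = wpar c' then (1:ℝ) else 0)
      = (A.card : ℝ)^2 + (B.card : ℝ)^2 := by
    have hinner : ∀ c : Fin n → Bool, ∑ c' ∈ C, (if wpar c = wpar c' then (1:ℝ) else 0)
        = ((C.filter fun c' => wpar c = wpar c').card : ℝ) := by
      intro c; rw [Finset.sum_boole]
    calc ∑ c ∈ C, ∑ c' ∈ C, (if wpar c = wpar c' then (1:ℝ) else 0)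
        = ∑ c ∈ C, ((C.filter fun c' => wpar c = wpar c').card : ℝ) :=
          Finset.sum_congr rfl fun c _ => hinner c
      _ = (∑ c ∈ A, ((C.filter fun c' => wpar c = wpar c').card : ℝ))
          + ∑ c ∈ B, ((C.filter fun c' => wpar c = wpar c').card : ℝ) :=
          (Finset.sum_filter_add_sum_filter_not C _ _).symm
      _ = (A.card : ℝ)^2 + (B.card : ℝ)^2 := by
          have h1 : ∀ c ∈ A, ((C.filter fun c' => wpar c = wpar c').card : ℝ) = A.card := by
            intro c hc
            have hw0 : wpar c = 0 := (Finset.mem_filter.mp hc).2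
            rw [hA]; congr 2
            refine Finset.filter_congr fun c' _ => ?_
            rw [hw0]; exact eq_comm
          have h2 : ∀ c ∈ B, ((C.filter fun c' => wpar c = wpar c').card : ℝ) = B.card := by
            intro c hc
            have hw1 : wpar c = 1 := by
              have := (Finset.mem_filter.mp hc).2
              revert this
              exact (by decide : ∀ x : ZMod 2, ¬ x = 0 → x = 1) _
            rw [hB]; congr 2
            refine Finset.filter_congr fun c' _ => ?_
            rw [hw1]
            constructor
            · intro h
              rw [← h]; decide
            · intro h
              exact ((by decide : ∀ x : ZMod 2, ¬ x = 0 → x = 1) _ h).symm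
          rw [Finset.sum_congr rfl h1, Finset.sum_congr rfl h2,
            Finset.sum_const, Finset.sum_const]
          push_cast; ring
  -- diagonal sum
  have hdiag : ∑ c ∈ C, ∑ c' ∈ C, (if c = c' then (2:ℝ) else 0) = 2 * M := by
    have : ∀ c ∈ C, ∑ c' ∈ C, (if c = c' then (2:ℝ) else 0) = 2 := by
      intro c hc
      rw [Finset.sum_ite_eq C c (fun _ => (2:ℝ))]
      simp [hc]
    rw [Finset.sum_congr rfl this, Finset.sum_const, hMdef]
    push_cast; ring
  -- lower bound on S
  have hS : (3/2) * M^2 - 2 * M ≤ ∑ c ∈ C, ∑ c' ∈ C, (hammingDist c c' : ℝ) := by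
    have step1 : ∑ c ∈ C, ∑ c' ∈ C,
        ((1 : ℝ) + (if wpar c = wpar c' then 1 else 0) - (if c = c' then 2 else 0))
        ≤ ∑ c ∈ C, ∑ c' ∈ C, (hammingDist c c' : ℝ) :=
      Finset.sum_le_sum fun c _ => Finset.sum_le_sum fun c' _ => pointwise c c'
    have expand : ∑ c ∈ C, ∑ c' ∈ C,
        ((1 : ℝ) + (if wpar c = wpar c' then 1 else 0) - (if c = c' then 2 else 0))
        = M^2 + ((A.card : ℝ)^2 + (B.card : ℝ)^2) - 2 * M := by
      simp_rw [Finset.sum_sub_distrib]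
      simp_rw [Finset.sum_add_distrib]
      rw [hS2, hdiag]
      rw [Finset.sum_const, Finset.sum_const]
      simp only [nsmul_eq_mul, mul_one]
      rw [hMdef]
      ring
    have quad : (3/2) * M^2 - 2 * M ≤ M^2 + ((A.card : ℝ)^2 + (B.card : ℝ)^2) - 2 * M := by
      nlinarith [sq_nonneg ((A.card : ℝ) - B.card), hab]
    linarith [expand ▸ step1]
  -- conclude
  rw [avgDist, ge_iff_le, ← hMdef]
  calc (3:ℝ)/2 - 2 / M = (1 / M^2) * ((3/2) * M^2 - 2 * M) := by
        field_simp
    _ ≤ (1 / M^2) * ∑ c ∈ C, ∑ c' ∈ C, (hammingDist c c' : ℝ) := by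
        apply mul_le_mul_of_nonneg_left hS
        positivity
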